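/- arXiv:1311.0974 — 3 statements merged into one kernel-verified Lean document; each statement's English description precedes it below -/
import Mathlib

section
/- Let p be a prime and let 𝔽̄_p be an algebraic closure of the field with p elements. The ring W(𝔽̄_p) of p-typical Witt vectors admits a unique lift of the Frobenius: if φ : W(𝔽̄_p) → W(𝔽̄_p) is any ring homomorphism satisfying φ(x) ≡ x^p (mod p·W(𝔽̄_p)) for all x, then φ equals the Witt vector Frobenius endomorphism of W(𝔽̄_p). -/
open WittVector

section Aux

variable (p : ℕ) [Fact p.Prime] {k : Type*} [Field k] [CharP k p] [PerfectRing k p]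

/-- Separatedness: an element of `W k` divisible by every power of `p` is zero. -/
private lemma witt_sep (y : WittVector p k) (h : ∀ n : ℕ, (p : WittVector p k) ^ n ∣ y) :
    y = 0 := by
  by_contra hy
  obtain ⟨m, b, hb, rfl⟩ := WittVector.exists_eq_pow_p_mul y hy
  obtain ⟨c, hc⟩ := h (m + 1)
  rw [pow_succ, mul_assoc] at hc
  have hpne : (p : WittVector p k) ^ m ≠ 0 :=
    pow_ne_zero _ (WittVector.p_nonzero p k)
  have hbc : b = (p : WittVector p k) * c := mul_left_cancel₀ hpne hc
  apply hb
  have : b.coeff 0 = (c * (p : WittVector p k)).coeff 0 := by rw [hbc, mul_comm]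
  rw [this, WittVector.mul_charP_coeff_zero]

private lemma frob_teich (a : k) :
    WittVector.frobenius (WittVector.teichmuller p a) = WittVector.teichmuller p (a ^ p) := by
  ext n
  cases n with
  | zero =>
    rw [WittVector.coeff_frobenius_charP, WittVector.teichmuller_coeff_zero,
      WittVector.teichmuller_coeff_zero]
  | succ n =>
    rw [WittVector.coeff_frobenius_charP, WittVector.teichmuller_coeff_pos _ _ _ n.succ_pos,
      WittVector.teichmuller_coeff_pos _ _ _ n.succ_pos, zero_pow (Fact.out : p.Prime).ne_zero]

private lemma phi_teich (φ : WittVector p k →+* WittVector p k)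
    (hφ : ∀ x : WittVector p k, ∃ y : WittVector p k, φ x = x ^ p + p * y) (a : k) :
    φ (WittVector.teichmuller p a) = WittVector.teichmuller p (a ^ p) := by
  have key : ∀ n : ℕ, (p : WittVector p k) ^ (n + 1) ∣
      φ (WittVector.teichmuller p a) - WittVector.teichmuller p (a ^ p) := by
    intro n
    obtain ⟨b, hb⟩ := (bijective_frobenius k p).surjective.iterate n a
    have hba : b ^ p ^ n = a := by rw [← iterate_frobenius, hb]
    have h1 : (p : WittVector p k) ∣
        φ (WittVector.teichmuller p b) - (WittVector.teichmuller p b) ^ p := by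
      obtain ⟨y, hy⟩ := hφ (WittVector.teichmuller p b)
      exact ⟨y, by rw [hy]; ring⟩
    have h2 := dvd_sub_pow_of_dvd_sub h1 n
    have e1 : (φ (WittVector.teichmuller p b)) ^ p ^ n = φ (WittVector.teichmuller p a) := by
      rw [← map_pow, ← map_pow, hba]
    have e2 : ((WittVector.teichmuller p b) ^ p) ^ p ^ n
        = WittVector.teichmuller p (a ^ p) := by
      rw [← pow_mul, mul_comm, pow_mul, ← map_pow, ← map_pow, hba]
    rwa [e1, e2] at h2
  apply sub_eq_zero.mp
  apply witt_sep p
  intro n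
  exact dvd_trans (pow_dvd_pow _ (Nat.le_succ n)) (key n)

private lemma phi_eq_aux (φ : WittVector p k →+* WittVector p k)
    (hφ : ∀ x : WittVector p k, ∃ y : WittVector p k, φ x = x ^ p + p * y) :
    ∀ (n : ℕ) (x : WittVector p k),
      (p : WittVector p k) ^ n ∣ φ x - WittVector.frobenius x := by
  intro n
  induction n with
  | zero => intro x; simpa using one_dvd _
  | succ n ih =>
    intro x
    set a := x.coeff 0 with ha
    have h0 : ∀ i < 1, (x - WittVector.teichmuller p a).coeff i = 0 := by
      intro i hi
      interval_cases i
      have : (x - WittVector.teichmuller p a).coeff 0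
          = WittVector.constantCoeff (x - WittVector.teichmuller p a) := rfl
      rw [this, map_sub]
      simp [WittVector.constantCoeff, ha]
    have hV : x - WittVector.teichmuller p a
        = WittVector.verschiebung ((x - WittVector.teichmuller p a).shift 1) := by
      have := WittVector.eq_iterate_verschiebung h0
      simpa using this
    obtain ⟨z, hz⟩ := (WittVector.frobenius_bijective p k).surjective
      ((x - WittVector.teichmuller p a).shift 1)
    have hx : x = WittVector.teichmuller p a + z * p := by
      rw [← WittVector.verschiebung_frobenius, hz, ← hV]; ring
    have hdec : φ x - WittVector.frobenius x = (φ z - WittVector.frobenius z) * p := by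
      rw [hx, map_add, map_add, map_mul, map_mul, map_natCast, map_natCast,
        phi_teich p φ hφ, frob_teich]
      ring
    obtain ⟨w, hw⟩ := ih z
    rw [hdec, hw, pow_succ]
    exact ⟨w, by ring⟩

end Aux

/-- `W(𝔽̄_p)` admits a unique lift of the Frobenius: any ring endomorphism `φ` with
`φ x ≡ x ^ p (mod p)` for all `x` equals the Witt vector Frobenius. -/
theorem wittVector_frobenius_lift_unique (p : ℕ) [Fact p.Prime]
    (φ : WittVector p (AlgebraicClosure (ZMod p)) →+* WittVector p (AlgebraicClosure (ZMod p)))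
    (hφ : ∀ x : WittVector p (AlgebraicClosure (ZMod p)),
      ∃ y : WittVector p (AlgebraicClosure (ZMod p)), φ x = x ^ p + p * y) :
    φ = WittVector.frobenius := by
  apply RingHom.ext
  intro x
  rw [← sub_eq_zero]
  exact witt_sep p _ fun n => phi_eq_aux p φ hφ n x
end

section
/- Let p be a prime, let A be a commutative ring on which multiplication by p is injective, let φ : A → A be a lift of the Frobenius, and let δ : A → A be the unique function with φ(a) = a^p + p·δ(a) for all a ∈ A. Let Φ : Ω_{A/ℤ} → Ω_{A/ℤ} be the ℤ-linear map induced by functoriality of Kähler differentials along φ. If the A-module Ω_{A/ℤ} is p-torsion-free (multiplication by p is injective on Ω_{A/ℤ}), then there exists a unique additive map τ : Ω_{A/ℤ} → Ω_{A/ℤ} such that p·τ(ω) = Φ(ω) for all ω ∈ Ω_{A/ℤ}, and this map satisfies τ(d(a)) = a^{p−1}·d(a) + d(δ(a)) for every a ∈ A. -/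
/-- Let `φ` be a Frobenius lift on a `p`-torsion-free commutative ring `A`, with
`φ a = a ^ p + p * δ a`, and let `Φ` be the induced map on `Ω[A⁄ℤ]`. If `Ω[A⁄ℤ]` is
`p`-torsion-free, then there is a unique additive map `τ` with `p • τ ω = Φ ω` for all
`ω`, and it satisfies `τ (d a) = a ^ (p - 1) • d a + d (δ a)`. -/
theorem frobenius_lift_cartier_inverse (p : ℕ) [Fact p.Prime]
    (A : Type*) [CommRing A] (hA : Function.Injective fun a : A => (p : A) * a)
    (φ : A →+* A) (hφ : ∀ a : A, ∃ b : A, φ a = a ^ p + p * b)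
    (δ : A → A) (hδ : ∀ a : A, φ a = a ^ p + p * δ a)
    (Φ : KaehlerDifferential ℤ A →ₗ[ℤ] KaehlerDifferential ℤ A)
    (hΦ : ∀ a b : A, Φ (a • KaehlerDifferential.D ℤ A b) =
      φ a • KaehlerDifferential.D ℤ A (φ b))
    (hΩ : Function.Injective fun ω : KaehlerDifferential ℤ A => (p : A) • ω) :
    (∃! τ : KaehlerDifferential ℤ A →+ KaehlerDifferential ℤ A,
        ∀ ω : KaehlerDifferential ℤ A, (p : A) • τ ω = Φ ω) ∧
      ∀ τ : KaehlerDifferential ℤ A →+ KaehlerDifferential ℤ A,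
        (∀ ω : KaehlerDifferential ℤ A, (p : A) • τ ω = Φ ω) →
        ∀ a : A, τ (KaehlerDifferential.D ℤ A a) =
          a ^ (p - 1) • KaehlerDifferential.D ℤ A a +
            KaehlerDifferential.D ℤ A (δ a) := by
  set D := KaehlerDifferential.D ℤ A with hD
  -- key computation
  have key : ∀ b : A, D (φ b) = (p : A) • (b ^ (p - 1) • D b + D (δ b)) := by
    intro b
    rw [hδ b, map_add, Derivation.leibniz_pow]
    have h1 : D ((p : A) * δ b) = (p : A) • D (δ b) := by
      rw [Derivation.leibniz]
      simp
    rw [h1, smul_add, ← Nat.cast_smul_eq_nsmul A p]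
  have hdiv : ∀ ω : KaehlerDifferential ℤ A, ∃ x, (p : A) • x = Φ ω := by
    intro ω
    have hmem : ω ∈ Submodule.span A (Set.range D) := by
      rw [KaehlerDifferential.span_range_derivation]; trivial
    have : ∀ a : A, ∃ x, (p : A) • x = Φ (a • ω) := by
      induction hmem using Submodule.span_induction with
      | mem x hx =>
        obtain ⟨b, rfl⟩ := hx
        intro a
        exact ⟨φ a • (b ^ (p - 1) • D b + D (δ b)), by
          rw [hΦ a b, key b, smul_comm]⟩
      | zero => intro a; exact ⟨0, by simp⟩
      | add x y _ _ hx hy =>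
        intro a
        obtain ⟨u, hu⟩ := hx a
        obtain ⟨v, hv⟩ := hy a
        exact ⟨u + v, by rw [smul_add, hu, hv, smul_add, map_add]⟩
      | smul c x _ hx =>
        intro a
        obtain ⟨u, hu⟩ := hx (a * c)
        exact ⟨u, by rw [hu, mul_smul]⟩
    simpa using this 1
  choose f hf using hdiv
  let τ : KaehlerDifferential ℤ A →+ KaehlerDifferential ℤ A :=
    { toFun := f
      map_zero' := hΩ (by show (p:A) • f 0 = (p:A) • 0; rw [hf 0]; simp)
      map_add' := fun x y => hΩ (by
        show (p:A) • f (x+y) = (p:A) • (f x + f y)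
        rw [hf, smul_add, hf, hf, map_add]) }
  have hτ : ∀ ω, (p : A) • τ ω = Φ ω := hf
  refine ⟨⟨τ, hτ, fun σ hσ => ?_⟩, fun σ hσ a => ?_⟩
  · ext ω
    exact hΩ (by show (p:A) • σ ω = (p:A) • τ ω; rw [hσ, hτ])
  · apply hΩ
    show (p:A) • σ (D a) = (p:A) • _
    rw [hσ, ← key a]
    have := hΦ 1 a
    simpa using this
end

section
/- Let p be a prime, let A be a commutative ring on which multiplication by p is injective, and let φ : A → A be a lift of the Frobenius. Then for every r ≥ 1 and all elements a₁, …, a_r ∈ A, the r-form d(φ(a₁)) ∧ ⋯ ∧ d(φ(a_r)) in the r-th exterior power ⋀^r_A Ω_{A/ℤ} lies in the submodule p^r · ⋀^r_A Ω_{A/ℤ}, i.e. the pullback along φ of an r-fold wedge of exact 1-forms is divisible by p^r. -/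
open Pointwise

/-- Let `φ` be a Frobenius lift on a `p`-torsion-free commutative ring `A`. For every
`r ≥ 1` and `a₁, …, a_r ∈ A`, the `r`-form `d (φ a₁) ∧ ⋯ ∧ d (φ a_r)` lies in
`p ^ r • ⋀[A]^r Ω[A⁄ℤ]`, i.e. it is divisible by `p ^ r` in the `r`-th exterior power. -/
theorem frobenius_lift_wedge_divisible (p : ℕ) [Fact p.Prime]
    (A : Type*) [CommRing A] (hA : Function.Injective fun a : A => (p : A) * a)
    (φ : A →+* A) (hφ : ∀ a : A, ∃ b : A, φ a = a ^ p + p * b)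
    (r : ℕ) (hr : 1 ≤ r) (a : Fin r → A) :
    ExteriorAlgebra.ιMulti A r (fun i => KaehlerDifferential.D ℤ A (φ (a i))) ∈
      (p : A) ^ r • (⋀[A]^r (KaehlerDifferential ℤ A) :
        Submodule A (ExteriorAlgebra A (KaehlerDifferential ℤ A))) := by
  set D := KaehlerDifferential.D ℤ A
  set ω : Fin r → KaehlerDifferential ℤ A :=
    fun i => (a i) ^ (p - 1) • D (a i) + D ((hφ (a i)).choose)
  have hD : ∀ i, D (φ (a i)) = (p : A) • ω i := by
    intro i
    have hb := (hφ (a i)).choose_spec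
    rw [hb]
    have hp : 0 < p := (Fact.out : p.Prime).pos
    simp only [ω, map_add, Derivation.leibniz_pow, Derivation.leibniz, smul_add,
      smul_smul]
    have hDp : D ((p : A)) = 0 := by
      have : ((p : A)) = algebraMap ℤ A (p : ℤ) := by push_cast; ring
      rw [this, Derivation.map_algebraMap]
    rw [hDp, smul_zero, add_zero]
    simp [mul_smul, Nat.cast_smul_eq_nsmul]
  have : (fun i => D (φ (a i))) = fun i => (p : A) • ω i := funext hD
  rw [this]
  have := (ExteriorAlgebra.ιMulti A r
      (M := KaehlerDifferential ℤ A)).map_smul_univ (fun _ => (p : A)) ω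
  erw [this]
  rw [Finset.prod_const, Finset.card_univ, Fintype.card_fin]
  exact Submodule.smul_mem_pointwise_smul _ _ _
    (ExteriorAlgebra.ιMulti_range A r (Set.mem_range_self ω))
end
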